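/- Let I ⊆ ℝ be an open interval, let f : ℝ → ℝ be nonnegative on I and of class C^{1,1} on its closure. Let t₀ ∈ I and M > 0 be such that the interval I_{t₀} := {t : |t - t₀| < M⁻¹ f(t₀)^{1/2}} is contained in I and M² ≥ Lip_{I_{t₀}}(f'). Then |f'(t₀)| ≤ (M + M⁻¹ Lip_{I_{t₀}}(f')) f(t₀)^{1/2} ≤ 2M f(t₀)^{1/2}. -/

import Mathlib

open Set

/-- Glaeser's inequality: if `f` is nonnegative on an open interval `I`, differentiable with
derivative `f'`, `t₀ ∈ I`, `M > 0`, the interval `J = (t₀ - M⁻¹√(f t₀), t₀ + M⁻¹√(f t₀))` is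
contained in `I`, and `f'` is Lipschitz on `J` with constant `K ≤ M²`, then
`|f' t₀| ≤ (M + M⁻¹ K) √(f t₀) ≤ 2 M √(f t₀)`. -/
theorem stmt0 (I : Set ℝ) (hIopen : IsOpen I) (hIconv : Convex ℝ I)
    (f f' : ℝ → ℝ)
    (hderiv : ∀ t ∈ I, HasDerivAt f (f' t) t)
    (hnonneg : ∀ t ∈ I, 0 ≤ f t)
    (t₀ : ℝ) (ht₀ : t₀ ∈ I) (M : ℝ) (hM : 0 < M)
    (J : Set ℝ)
    (hJ : J = Ioo (t₀ - M⁻¹ * Real.sqrt (f t₀)) (t₀ + M⁻¹ * Real.sqrt (f t₀)))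
    (hJI : J ⊆ I)
    (K : ℝ) (hK : 0 ≤ K)
    (hLip : LipschitzOnWith (Real.toNNReal K) f' J)
    (hKM : K ≤ M ^ 2) :
    |f' t₀| ≤ (M + M⁻¹ * K) * Real.sqrt (f t₀) ∧
      (M + M⁻¹ * K) * Real.sqrt (f t₀) ≤ 2 * M * Real.sqrt (f t₀) := by
  have hM' : (0:ℝ) < M⁻¹ := inv_pos.mpr hM
  set s := Real.sqrt (f t₀) with hs
  have hfnn : 0 ≤ f t₀ := hnonneg t₀ ht₀
  have hsnn : 0 ≤ s := Real.sqrt_nonneg _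
  have hMK : M⁻¹ * K ≤ M := by
    rw [inv_mul_le_iff₀ hM]
    nlinarith
  have hsecond : (M + M⁻¹ * K) * s ≤ 2 * M * s := by
    nlinarith
  refine ⟨?_, hsecond⟩
  rcases eq_or_lt_of_le hsnn with hs0 | hs0
  · -- f t₀ = 0, local minimum
    have hft0 : f t₀ = 0 := le_antisymm (Real.sqrt_eq_zero'.mp hs0.symm) hfnn
    have hmin : IsLocalMin f t₀ := by
      filter_upwards [hIopen.mem_nhds ht₀] with t ht
      rw [hft0]; exact hnonneg t ht
    have hf'0 : f' t₀ = 0 := hmin.hasDerivAt_eq_zero (hderiv t₀ ht₀)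
    simp [hf'0, ← hs0]
  · -- main case
    set c := M⁻¹ * s with hc_def
    have hc : 0 < c := mul_pos hM' hs0
    have ht₀J : t₀ ∈ J := by rw [hJ]; constructor <;> [linarith; linarith]
    have taylor : ∀ t ∈ J, 0 ≤ f t₀ + f' t₀ * (t - t₀) + K * (t - t₀)^2 := by
      intro t htJ
      have hsub : uIcc t₀ t ⊆ J := by
        rw [hJ]
        rw [hJ] at ht₀J htJ
        exact Set.OrdConnected.uIcc_subset Set.ordConnected_Ioo ht₀J htJ
      have hderiv' : ∀ u ∈ uIcc t₀ t,
          HasDerivWithinAt (fun u => f u - f' t₀ * u) (f' u - f' t₀) (uIcc t₀ t) u := by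
        intro u hu
        exact ((hderiv u (hJI (hsub hu))).sub
          ((hasDerivAt_id u).const_mul (f' t₀) |>.congr_deriv (by ring))).hasDerivWithinAt
      have hbound : ∀ u ∈ uIcc t₀ t, ‖f' u - f' t₀‖ ≤ K * |t - t₀| := by
        intro u hu
        have h1 : dist (f' u) (f' t₀) ≤ K * dist u t₀ := by
          have := hLip.dist_le_mul u (hsub hu) t₀ ht₀J
          rwa [Real.coe_toNNReal K hK] at this
        have h2 : dist u t₀ ≤ |t - t₀| := by
          rw [Real.dist_eq]
          rcases le_total t₀ t with h | h
          · rw [uIcc_of_le h] at hu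
            rw [abs_of_nonneg (by linarith [hu.1]), abs_of_nonneg (by linarith)]
            linarith [hu.2]
          · rw [uIcc_of_ge h] at hu
            rw [abs_of_nonpos (by linarith [hu.2]), abs_of_nonpos (by linarith)]
            linarith [hu.1]
        calc ‖f' u - f' t₀‖ = dist (f' u) (f' t₀) := (Real.dist_eq _ _).symm
          _ ≤ K * dist u t₀ := h1
          _ ≤ K * |t - t₀| := by nlinarith [dist_nonneg (x := u) (y := t₀)]
      have key := (convex_uIcc t₀ t).norm_image_sub_le_of_norm_hasDerivWithin_le
        hderiv' hbound left_mem_uIcc right_mem_uIcc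
      have hft : 0 ≤ f t := hnonneg t (hJI htJ)
      rw [Real.norm_eq_abs, Real.norm_eq_abs] at key
      have key' := abs_le.mp key
      nlinarith [sq_abs (t - t₀), abs_nonneg (t - t₀), key'.1, key'.2]
    have key2 : ∀ h ∈ Ioo (0:ℝ) c, |f' t₀| * h ≤ f t₀ + K * h^2 := by
      intro h hh
      obtain ⟨hh1, hh2⟩ := hh
      rcases le_total 0 (f' t₀) with h0 | h0
      · have ht : t₀ - h ∈ J := by rw [hJ]; constructor <;> [linarith; linarith]
        have := taylor _ ht
        rw [abs_of_nonneg h0]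
        nlinarith
      · have ht : t₀ + h ∈ J := by rw [hJ]; constructor <;> [linarith; linarith]
        have := taylor _ ht
        rw [abs_of_nonpos h0]
        nlinarith
    have key3 : |f' t₀| * c ≤ f t₀ + K * c^2 := by
      have hcont : Continuous (fun h : ℝ => f t₀ + K * h^2 - |f' t₀| * h) := by continuity
      have htend : Filter.Tendsto (fun h : ℝ => f t₀ + K * h^2 - |f' t₀| * h)
          (nhdsWithin c (Iio c)) (nhds (f t₀ + K * c^2 - |f' t₀| * c)) :=
        (hcont.tendsto c).mono_left nhdsWithin_le_nhds
      have h0 : (0:ℝ) ≤ f t₀ + K * c^2 - |f' t₀| * c := by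
        refine ge_of_tendsto htend ?_
        filter_upwards [Ioo_mem_nhdsLT_of_mem ⟨hc, le_refl c⟩] with h hh
        linarith [key2 h hh]
      linarith
    have hfeq : f t₀ = s^2 := (Real.sq_sqrt hfnn).symm
    rw [← mul_le_mul_iff_of_pos_right hc]
    calc |f' t₀| * c ≤ f t₀ + K * c^2 := key3
      _ = (M + M⁻¹ * K) * s * c := by
          rw [hfeq, hc_def]
          field_simp
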